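/- arXiv:2210.07338 — 2 statements merged into one kernel-verified Lean document; each statement's English description precedes it below -/
import Mathlib

section
/- Let μ_{k+1} be an H-step lookahead policy with respect to V_k, i.e., T_{μ_{k+1}} T^{H−1} V_k = T^H V_k. If TV_k − V_k ≤ κ·e componentwise with κ ≥ 0, then J^{μ_{k+1}} ≤ T^{H−1} V_k + (α^{H−1} κ/(1−α))·e componentwise. -/
open Finset

/-- Bellman optimality operator for a finite MDP. -/
noncomputable def bellman {S A : Type*} [Fintype S] [Fintype A] [Nonempty A]
    (P : A → S → S → ℝ) (g : S → A → ℝ) (α : ℝ) (J : S → ℝ) : S → ℝ :=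
  fun i => ⨅ u : A, (g i u + α * ∑ j, P u i j * J j)

/-- Bellman operator of a fixed policy `μ`. -/
noncomputable def Tpol {S A : Type*} [Fintype S]
    (P : A → S → S → ℝ) (g : S → A → ℝ) (α : ℝ) (μ : S → A) (J : S → ℝ) : S → ℝ :=
  fun i => g i (μ i) + α * ∑ j, P (μ i) i j * J j

section AuxLemmas

variable {S A : Type*} [Fintype S] [Fintype A] [Nonempty A]

lemma bellman_mono' (P : A → S → S → ℝ) (g : S → A → ℝ) (α : ℝ)
    (hα : 0 ≤ α) (hP0 : ∀ u i j, 0 ≤ P u i j)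
    {J J' : S → ℝ} (h : ∀ j, J j ≤ J' j) (i : S) :
    bellman P g α J i ≤ bellman P g α J' i := by
  apply ciInf_mono (Set.Finite.bddBelow (Set.finite_range _))
  intro u
  gcongr
  · exact hP0 u i _
  · exact h _

lemma bellman_shift' (P : A → S → S → ℝ) (g : S → A → ℝ) (α : ℝ)
    (hP1 : ∀ u i, ∑ j, P u i j = 1) (J : S → ℝ) (c : ℝ) (i : S) :
    bellman P g α (fun j => J j + c) i = bellman P g α J i + α * c := by
  unfold bellman
  have h : ∀ u : A, g i u + α * ∑ j, P u i j * (J j + c)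
      = (g i u + α * ∑ j, P u i j * J j) + α * c := by
    intro u
    have : (∑ j, P u i j * (J j + c)) = (∑ j, P u i j * J j) + (∑ j, P u i j) * c := by
      rw [Finset.sum_mul, ← Finset.sum_add_distrib]; congr 1; ext j; ring
    rw [this, hP1]; ring
  simp only [h]
  exact (ciInf_add (f := fun u : A => g i u + α * ∑ j, P u i j * J j)
    (Set.Finite.bddBelow (Set.finite_range _)) (α * c)).symm

lemma Tpol_mono' (P : A → S → S → ℝ) (g : S → A → ℝ) (α : ℝ) (μ : S → A)
    (hα : 0 ≤ α) (hP0 : ∀ u i j, 0 ≤ P u i j)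
    {J J' : S → ℝ} (h : ∀ j, J j ≤ J' j) (i : S) :
    Tpol P g α μ J i ≤ Tpol P g α μ J' i := by
  unfold Tpol
  gcongr
  · exact hP0 _ i _
  · exact h _

lemma Tpol_shift' (P : A → S → S → ℝ) (g : S → A → ℝ) (α : ℝ) (μ : S → A)
    (hP1 : ∀ u i, ∑ j, P u i j = 1) (J : S → ℝ) (c : ℝ) (i : S) :
    Tpol P g α μ (fun j => J j + c) i = Tpol P g α μ J i + α * c := by
  unfold Tpol
  have : (∑ j, P (μ i) i j * (J j + c)) = (∑ j, P (μ i) i j * J j) + (∑ j, P (μ i) i j) * c := by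
    rw [Finset.sum_mul, ← Finset.sum_add_distrib]; congr 1; ext j; ring
  rw [this, hP1]; ring

end AuxLemmas

/-- If `μ` is an `H`-step lookahead policy w.r.t. `V` and `TV - V ≤ κ·e`, then
`J^μ ≤ T^{H-1} V + (α^{H-1} κ/(1-α))·e`. -/
theorem lookahead_policy_bound {S A : Type*} [Fintype S] [Fintype A] [Nonempty A]
    (P : A → S → S → ℝ) (g : S → A → ℝ) (α : ℝ)
    (hα : α ∈ Set.Ioo (0 : ℝ) 1)
    (hP0 : ∀ u i j, 0 ≤ P u i j) (hP1 : ∀ u i, ∑ j, P u i j = 1)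
    (H : ℕ) (hH : 1 ≤ H)
    (μ : S → A) (V : S → ℝ)
    (hlookahead : Tpol P g α μ ((bellman P g α)^[H - 1] V) = (bellman P g α)^[H] V)
    (κ : ℝ) (hκ : 0 ≤ κ)
    (hV : ∀ i, bellman P g α V i - V i ≤ κ)
    (Jμ : S → ℝ) (hJμ : Tpol P g α μ Jμ = Jμ) :
    ∀ i, Jμ i ≤ (bellman P g α)^[H - 1] V i + α ^ (H - 1) * κ / (1 - α) := by
  obtain ⟨hα0, hα1⟩ := hα
  have hα0' : (0 : ℝ) ≤ α := le_of_lt hα0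
  have h1α : (0 : ℝ) < 1 - α := by linarith
  set T := bellman P g α with hT
  -- Step lemma : T^[n+1] V ≤ T^[n] V + α^n κ
  have hstep : ∀ n i, T^[n + 1] V i ≤ T^[n] V i + α ^ n * κ := by
    intro n
    induction n with
    | zero => intro i; simpa using (by linarith [hV i] : T V i ≤ V i + κ)
    | succ n ih =>
      intro i
      rw [Function.iterate_succ_apply' T (n + 1)]
      calc T (T^[n + 1] V) i ≤ T (fun j => T^[n] V j + α ^ n * κ) i :=
            bellman_mono' P g α hα0' hP0 ih i
        _ = T (T^[n] V) i + α * (α ^ n * κ) :=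
            bellman_shift' P g α hP1 _ _ i
        _ = T^[n + 1] V i + α ^ (n + 1) * κ := by
            rw [Function.iterate_succ_apply' T n V]; ring
  set W := T^[H - 1] V with hW
  -- Tpol μ W ≤ W + α^(H-1) κ
  have hTW : ∀ i, Tpol P g α μ W i ≤ W i + α ^ (H - 1) * κ := by
    intro i
    have hH' : H - 1 + 1 = H := Nat.succ_pred_eq_of_pos hH
    have := hstep (H - 1) i
    rw [hH'] at this
    calc Tpol P g α μ W i = T^[H] V i := by rw [hW, hlookahead]
      _ ≤ W i + α ^ (H - 1) * κ := this
  intro i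
  haveI : Nonempty S := ⟨i⟩
  obtain ⟨i₀, hi₀⟩ := Finite.exists_max (fun j => Jμ j - W j)
  set M := Jμ i₀ - W i₀ with hM
  have hle : ∀ j, Jμ j ≤ W j + M := fun j => by linarith [hi₀ j]
  have key : M ≤ α ^ (H - 1) * κ + α * M := by
    have h1 : Jμ i₀ ≤ Tpol P g α μ (fun j => W j + M) i₀ := by
      rw [← hJμ]; exact Tpol_mono' P g α μ hα0' hP0 hle i₀
    have h2 : Tpol P g α μ (fun j => W j + M) i₀ = Tpol P g α μ W i₀ + α * M :=
      Tpol_shift' P g α μ hP1 _ _ i₀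
    have h3 := hTW i₀
    have h4 : Jμ i₀ = W i₀ + M := by rw [hM]; ring
    linarith
  have hMle : M ≤ α ^ (H - 1) * κ / (1 - α) := by
    rw [le_div_iff₀ h1α]
    nlinarith
  calc Jμ i ≤ W i + M := hle i
    _ ≤ W i + α ^ (H - 1) * κ / (1 - α) := by linarith
end

section
/- For the H-step lookahead policy μ defined by T_μ T^{H−1} V = T^H V, the suboptimality satisfies ‖J^μ − J*‖_∞ ≤ (2 α^H / (1−α)) ‖V − J*‖_∞. -/
open Finset

section Aux

variable {S A : Type*} [Fintype S] [Fintype A] [Nonempty A]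

lemma sum_weighted_bound (P : A → S → S → ℝ)
    (hP0 : ∀ u i j, 0 ≤ P u i j) (hP1 : ∀ u i, ∑ j, P u i j = 1)
    (u : A) (i : S) (d : S → ℝ) :
    |∑ j, P u i j * d j| ≤ ‖d‖ := by
  calc |∑ j, P u i j * d j| ≤ ∑ j, |P u i j * d j| := Finset.abs_sum_le_sum_abs _ _
    _ ≤ ∑ j, P u i j * ‖d‖ := by
        apply Finset.sum_le_sum
        intro j _
        rw [abs_mul, abs_of_nonneg (hP0 u i j)]
        exact mul_le_mul_of_nonneg_left (by simpa using norm_le_pi_norm d j) (hP0 u i j)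
    _ = ‖d‖ := by rw [← Finset.sum_mul, hP1, one_mul]

lemma abs_ciInf_sub_ciInf (f f' : A → ℝ) (c : ℝ)
    (h : ∀ u, |f u - f' u| ≤ c) : |(⨅ u, f u) - ⨅ u, f' u| ≤ c := by
  rw [abs_sub_le_iff]
  constructor
  · rw [sub_le_iff_le_add]
    have : ∀ u, (⨅ u, f u) - c ≤ f' u := by
      intro u
      have h1 : (⨅ u, f u) ≤ f u := ciInf_le (Finite.bddBelow_range f) u
      have h2 := (abs_sub_le_iff.mp (h u)).1
      linarith
    have := le_ciInf this
    linarith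
  · rw [sub_le_iff_le_add]
    have : ∀ u, (⨅ u, f' u) - c ≤ f u := by
      intro u
      have h1 : (⨅ u, f' u) ≤ f' u := ciInf_le (Finite.bddBelow_range f') u
      have h2 := (abs_sub_le_iff.mp (h u)).2
      linarith
    have := le_ciInf this
    linarith

lemma Tpol_contract (P : A → S → S → ℝ) (g : S → A → ℝ) (α : ℝ) (hα0 : 0 ≤ α)
    (hP0 : ∀ u i j, 0 ≤ P u i j) (hP1 : ∀ u i, ∑ j, P u i j = 1)
    (μ : S → A) (J J' : S → ℝ) :
    ‖Tpol P g α μ J - Tpol P g α μ J'‖ ≤ α * ‖J - J'‖ := by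
  rw [pi_norm_le_iff_of_nonneg (by positivity)]
  intro i
  have hsum : ∑ j, P (μ i) i j * (J j - J' j)
      = ∑ j, P (μ i) i j * J j - ∑ j, P (μ i) i j * J' j := by
    rw [← Finset.sum_sub_distrib]
    exact Finset.sum_congr rfl fun j _ => by ring
  have key : (Tpol P g α μ J - Tpol P g α μ J') i
      = α * ∑ j, P (μ i) i j * (J - J') j := by
    simp only [Pi.sub_apply, Tpol]
    rw [hsum]; ring
  rw [Real.norm_eq_abs, key, abs_mul, abs_of_nonneg hα0]
  exact mul_le_mul_of_nonneg_left (sum_weighted_bound P hP0 hP1 _ _ _) hα0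

lemma bellman_contract (P : A → S → S → ℝ) (g : S → A → ℝ) (α : ℝ) (hα0 : 0 ≤ α)
    (hP0 : ∀ u i j, 0 ≤ P u i j) (hP1 : ∀ u i, ∑ j, P u i j = 1)
    (J J' : S → ℝ) :
    ‖bellman P g α J - bellman P g α J'‖ ≤ α * ‖J - J'‖ := by
  rw [pi_norm_le_iff_of_nonneg (by positivity)]
  intro i
  rw [Real.norm_eq_abs, Pi.sub_apply]
  apply abs_ciInf_sub_ciInf
  intro u
  have hsum : ∑ j, P u i j * (J j - J' j)
      = ∑ j, P u i j * J j - ∑ j, P u i j * J' j := by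
    rw [← Finset.sum_sub_distrib]
    exact Finset.sum_congr rfl fun j _ => by ring
  have key : (g i u + α * ∑ j, P u i j * J j) - (g i u + α * ∑ j, P u i j * J' j)
      = α * ∑ j, P u i j * (J - J') j := by
    simp only [Pi.sub_apply]
    rw [hsum]; ring
  rw [key, abs_mul, abs_of_nonneg hα0]
  exact mul_le_mul_of_nonneg_left (sum_weighted_bound P hP0 hP1 _ _ _) hα0

lemma bellman_iter_bound (P : A → S → S → ℝ) (g : S → A → ℝ) (α : ℝ) (hα0 : 0 ≤ α)
    (hP0 : ∀ u i j, 0 ≤ P u i j) (hP1 : ∀ u i, ∑ j, P u i j = 1)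
    (Jstar : S → ℝ) (hJstar : bellman P g α Jstar = Jstar)
    (V : S → ℝ) (n : ℕ) :
    ‖(bellman P g α)^[n] V - Jstar‖ ≤ α ^ n * ‖V - Jstar‖ := by
  induction n with
  | zero => simp
  | succ n ih =>
    rw [Function.iterate_succ_apply']
    calc ‖bellman P g α ((bellman P g α)^[n] V) - Jstar‖
        = ‖bellman P g α ((bellman P g α)^[n] V) - bellman P g α Jstar‖ := by rw [hJstar]
      _ ≤ α * ‖(bellman P g α)^[n] V - Jstar‖ := bellman_contract P g α hα0 hP0 hP1 _ _
      _ ≤ α * (α ^ n * ‖V - Jstar‖) := mul_le_mul_of_nonneg_left ih hα0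
      _ = α ^ (n + 1) * ‖V - Jstar‖ := by ring

end Aux

/-- Suboptimality of the `H`-step lookahead policy:
`‖J^μ - J*‖_∞ ≤ (2 α^H/(1-α)) ‖V - J*‖_∞` (sup norms on `S → ℝ`). -/
theorem lookahead_suboptimality {S A : Type*} [Fintype S] [Fintype A] [Nonempty A]
    (P : A → S → S → ℝ) (g : S → A → ℝ) (α : ℝ)
    (hα : α ∈ Set.Ioo (0 : ℝ) 1)
    (hP0 : ∀ u i j, 0 ≤ P u i j) (hP1 : ∀ u i, ∑ j, P u i j = 1)
    (H : ℕ) (hH : 1 ≤ H)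
    (V : S → ℝ) (μ : S → A)
    (hlookahead : Tpol P g α μ ((bellman P g α)^[H - 1] V) = (bellman P g α)^[H] V)
    (Jstar : S → ℝ) (hJstar : bellman P g α Jstar = Jstar)
    (Jμ : S → ℝ) (hJμ : Tpol P g α μ Jμ = Jμ) :
    ‖Jμ - Jstar‖ ≤ 2 * α ^ H / (1 - α) * ‖V - Jstar‖ := by
  obtain ⟨hα0, hα1⟩ := hα
  have hα0' : (0:ℝ) ≤ α := le_of_lt hα0
  set W := (bellman P g α)^[H - 1] V with hW
  set d := ‖Jμ - Jstar‖ with hd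
  set e := ‖V - Jstar‖ with he
  have hWbound : ‖W - Jstar‖ ≤ α ^ (H - 1) * e :=
    bellman_iter_bound P g α hα0' hP0 hP1 Jstar hJstar V (H - 1)
  have hHbound : ‖(bellman P g α)^[H] V - Jstar‖ ≤ α ^ H * e :=
    bellman_iter_bound P g α hα0' hP0 hP1 Jstar hJstar V H
  have hpow : α * α ^ (H - 1) = α ^ H := by
    rw [← pow_succ']
    congr 1
    omega
  have step1 : d ≤ ‖Tpol P g α μ Jμ - Tpol P g α μ W‖ + ‖(bellman P g α)^[H] V - Jstar‖ := by
    rw [hd, ← dist_eq_norm, ← dist_eq_norm, ← dist_eq_norm]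
    calc dist Jμ Jstar ≤ dist Jμ ((bellman P g α)^[H] V) + dist ((bellman P g α)^[H] V) Jstar :=
          dist_triangle _ _ _
      _ = dist (Tpol P g α μ Jμ) (Tpol P g α μ W) + dist ((bellman P g α)^[H] V) Jstar := by
          rw [hJμ, hlookahead]
  have step2 : ‖Tpol P g α μ Jμ - Tpol P g α μ W‖ ≤ α * ‖Jμ - W‖ :=
    Tpol_contract P g α hα0' hP0 hP1 μ Jμ W
  have step3 : ‖Jμ - W‖ ≤ d + ‖W - Jstar‖ := by
    rw [← dist_eq_norm, ← dist_eq_norm, hd, ← dist_eq_norm]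
    calc dist Jμ W ≤ dist Jμ Jstar + dist Jstar W := dist_triangle _ _ _
      _ = dist Jμ Jstar + dist W Jstar := by rw [dist_comm Jstar W]
  have he0 : 0 ≤ e := norm_nonneg _
  have key : d ≤ α * d + 2 * α ^ H * e := by
    have h4 : α * ‖Jμ - W‖ ≤ α * (d + α ^ (H - 1) * e) := by
      apply mul_le_mul_of_nonneg_left _ hα0'
      linarith
    have : α * (d + α ^ (H - 1) * e) = α * d + α ^ H * e := by
      rw [mul_add, ← mul_assoc, hpow]
    nlinarith
  have h1α : 0 < 1 - α := by linarith
  rw [div_mul_eq_mul_div, le_div_iff₀ h1α]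
  nlinarith
end
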